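/- arXiv:2202.09576 — 6 statements merged into one kernel-verified Lean document; each statement's English description precedes it below -/
import Mathlib

section
/- Let f be a monic polynomial of degree n ≥ 1 with real coefficients, let α be a real number with 1 ≤ α < 2, and set θ = (α-1)π/2. Then every complex root λ of f satisfies |arg(λ)| > απ/2 if and only if every complex number z with f(z·e^{iθ}) = 0 satisfies Re(z) < 0. -/
open Polynomial Complex

lemma aux_re (w : ℂ) (θ : ℝ) :
    (w * Complex.exp (-(θ : ℂ) * I)).re = ‖w‖ * Real.cos (w.arg - θ) := by
  conv_lhs => rw [← Complex.norm_mul_exp_arg_mul_I w]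
  rw [mul_assoc, ← Complex.exp_add]
  have h : (w.arg : ℂ) * I + -(θ : ℂ) * I = ((w.arg - θ : ℝ) : ℂ) * I := by push_cast; ring
  rw [h, Complex.re_ofReal_mul, Complex.exp_ofReal_mul_I_re]

/-- For a monic real polynomial `f` of degree `n ≥ 1` and `1 ≤ α < 2`, with
`θ = (α-1)π/2`: all complex roots of `f` lie in the stability sector
`|arg λ| > απ/2` iff all complex `z` with `f (z · e^{iθ}) = 0` have negative
real part. -/
theorem sector_iff_rotated_left_half_plane (n : ℕ) (hn : 1 ≤ n)
    (f : Polynomial ℝ) (hmonic : f.Monic) (hdeg : f.natDegree = n)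
    (α : ℝ) (hα1 : 1 ≤ α) (hα2 : α < 2) (θ : ℝ) (hθ : θ = (α - 1) * Real.pi / 2) :
    (∀ z : ℂ, (f.map (algebraMap ℝ ℂ)).IsRoot z → α * Real.pi / 2 < |z.arg|) ↔
      (∀ z : ℂ, (f.map (algebraMap ℝ ℂ)).eval (z * Complex.exp (θ * Complex.I)) = 0 →
        z.re < 0) := by
  have hpi := Real.pi_pos
  have ht0 : 0 ≤ θ := by
    rw [hθ]; have : 0 ≤ α - 1 := by linarith
    positivity
  have ht2 : θ < Real.pi / 2 := by rw [hθ]; nlinarith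
  have hαθ : α * Real.pi / 2 = θ + Real.pi / 2 := by rw [hθ]; ring
  rw [hαθ]
  constructor
  · -- sector ⟹ half-plane
    intro H z hz
    set w : ℂ := z * Complex.exp (θ * Complex.I) with hw
    have ha := H w hz
    have hwne : w ≠ 0 := by
      rintro h0
      rw [h0] at ha
      simp only [Complex.arg_zero, abs_zero] at ha
      linarith
    have hzeq : z = w * Complex.exp (-(θ : ℂ) * I) := by
      rw [hw, mul_assoc, ← Complex.exp_add]
      simp
    have hre : z.re = ‖w‖ * Real.cos (w.arg - θ) := by
      rw [hzeq, aux_re]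
    have ha1 : -Real.pi < w.arg := Complex.neg_pi_lt_arg w
    have ha2 : w.arg ≤ Real.pi := Complex.arg_le_pi w
    have hcos : Real.cos (w.arg - θ) < 0 := by
      rcases lt_abs.mp ha with h | h
      · exact Real.cos_neg_of_pi_div_two_lt_of_lt (by linarith) (by linarith)
      · rw [← Real.cos_neg]
        exact Real.cos_neg_of_pi_div_two_lt_of_lt (by linarith) (by linarith)
    rw [hre]
    exact mul_neg_of_pos_of_neg (norm_pos_iff.mpr hwne) hcos
  · -- half-plane ⟹ sector
    intro H w hw
    have hwne : w ≠ 0 := by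
      rintro rfl
      have := H 0 (by simpa using hw)
      simp at this
    have key : ∀ v : ℂ, (f.map (algebraMap ℝ ℂ)).eval v = 0 →
        θ + Real.pi / 2 < v.arg ∨ v.arg < θ - Real.pi / 2 := by
      intro v hv
      have hroot : (f.map (algebraMap ℝ ℂ)).eval
          ((v * Complex.exp (-(θ : ℂ) * I)) * Complex.exp (θ * Complex.I)) = 0 := by
        rw [mul_assoc, ← Complex.exp_add]
        simpa using hv
      have hre := H _ hroot
      rw [aux_re] at hre
      have hcos : Real.cos (v.arg - θ) < 0 := by
        by_contra hc
        push_neg at hc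
        nlinarith [norm_nonneg v]
      by_contra hc
      push_neg at hc
      obtain ⟨h1, h2⟩ := hc
      have := Real.cos_nonneg_of_neg_pi_div_two_le_of_le
        (x := v.arg - θ) (by linarith) (by linarith)
      linarith
    by_cases hπ : w.arg = Real.pi
    · rw [hπ, abs_of_pos hpi]; linarith
    · have h1 := key w hw
      have hcw : (f.map (algebraMap ℝ ℂ)).eval ((starRingEnd ℂ) w) = 0 := by
        have h0 : (aeval w) f = 0 := by
          rw [Polynomial.aeval_def, ← Polynomial.eval_map]; exact hw
        rw [Polynomial.eval_map, ← Polynomial.aeval_def, aeval_conj, h0, map_zero]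
      have h2 := key _ hcw
      rw [Complex.arg_conj, if_neg hπ] at h2
      rw [lt_abs]
      rcases h1 with h1 | h1
      · exact Or.inl h1
      · rcases h2 with h2 | h2
        · right; linarith
        · exfalso; linarith
end

section
/- Let α be a real number with 1 ≤ α < 2, set s = cos²(απ/2), and let A be a 2×2 real matrix whose characteristic polynomial is λ² + a_1 λ + a_2. Then every complex eigenvalue λ of A satisfies |arg(λ)| > απ/2 if and only if a_1 > 0 and a_2·(a_1² - 4·a_2·s) > 0. -/
open Polynomial Complex Matrix

/-- Stability criterion for 2-dimensional fractional-order systems with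
`1 ≤ α < 2` and `s = cos²(απ/2)`: all eigenvalues `λ` of `A` satisfy
`|arg λ| > απ/2` iff `a₁ > 0` and `a₂(a₁² - 4a₂s) > 0`. -/
theorem frac_stability_dim2 (α : ℝ) (hα1 : 1 ≤ α) (hα2 : α < 2)
    (s : ℝ) (hs : s = Real.cos (α * Real.pi / 2) ^ 2)
    (a1 a2 : ℝ) (A : Matrix (Fin 2) (Fin 2) ℝ)
    (hchar : A.charpoly = X ^ 2 + C a1 * X + C a2) :
    (∀ z : ℂ, (A.charpoly.map (algebraMap ℝ ℂ)).IsRoot z → α * Real.pi / 2 < |z.arg|) ↔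
      (0 < a1 ∧ 0 < a2 * (a1 ^ 2 - 4 * a2 * s)) := by
  have hπ := Real.pi_pos
  set θ := α * Real.pi / 2 with hθdef
  have hθ1 : Real.pi / 2 ≤ θ := by rw [hθdef]; nlinarith
  have hθ2 : θ < Real.pi := by rw [hθdef]; nlinarith
  have hθ0 : 0 < θ := by linarith
  set c := Real.cos θ with hcdef
  have hc0 : c ≤ 0 := Real.cos_nonpos_of_pi_div_two_le_of_le hθ1 (by linarith)
  have hc1 : -1 < c := by
    have h := Real.strictAntiOn_cos (Set.mem_Icc.mpr ⟨hθ0.le, hθ2.le⟩)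
      (Set.mem_Icc.mpr ⟨by linarith, le_refl Real.pi⟩) hθ2
    rwa [Real.cos_pi] at h
  have hsnn : 0 ≤ s := by rw [hs]; positivity
  have hs1 : s < 1 := by rw [hs]; nlinarith
  have hargiff : ∀ z : ℂ, (θ < |z.arg|) ↔ (z ≠ 0 ∧ z.re < ‖z‖ * c) := by
    intro z
    by_cases hz : z = 0
    · simp [hz, Complex.arg_zero, abs_zero, not_lt.mpr hθ0.le]
    · have habs : 0 < ‖z‖ := norm_pos_iff.mpr hz
      have h1 : |z.arg| ∈ Set.Icc 0 Real.pi :=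
        Set.mem_Icc.mpr ⟨abs_nonneg _, Complex.abs_arg_le_pi z⟩
      have h2 : θ ∈ Set.Icc 0 Real.pi := Set.mem_Icc.mpr ⟨hθ0.le, hθ2.le⟩
      rw [← Real.strictAntiOn_cos.lt_iff_gt h1 h2, Real.cos_abs, Complex.cos_arg hz,
        div_lt_iff₀ habs]
      rw [mul_comm]
      simp [hz, hcdef]
  have hroot : ∀ z : ℂ, ((A.charpoly.map (algebraMap ℝ ℂ)).IsRoot z ↔
      z ^ 2 + (a1 : ℂ) * z + (a2 : ℂ) = 0) := by
    intro z
    rw [hchar]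
    simp [Polynomial.IsRoot]
  simp only [hroot, hargiff]
  by_cases hD : 0 ≤ a1 ^ 2 - 4 * a2
  · -- real roots
    set w := Real.sqrt (a1 ^ 2 - 4 * a2) with hwdef
    have hw0 : 0 ≤ w := Real.sqrt_nonneg _
    have hw2 : w ^ 2 = a1 ^ 2 - 4 * a2 := Real.sq_sqrt hD
    have hw2c : (w : ℂ) ^ 2 = (a1 : ℂ) ^ 2 - 4 * (a2 : ℂ) := by
      have := congrArg (fun x : ℝ => (x : ℂ)) hw2
      push_cast at this
      exact this
    have hfac : ∀ z : ℂ, z ^ 2 + (a1 : ℂ) * z + (a2 : ℂ) =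
        (z - (((-a1 + w) / 2 : ℝ) : ℂ)) * (z - (((-a1 - w) / 2 : ℝ) : ℂ)) := by
      intro z
      push_cast
      linear_combination (1/4 : ℂ) * hw2c
    have hrealcond : ∀ x : ℝ, (((x : ℂ) ≠ 0 ∧ ((x : ℂ)).re < ‖(x : ℂ)‖ * c)) ↔ x < 0 := by
      intro x
      rw [Complex.norm_real, Real.norm_eq_abs]
      simp only [Complex.ofReal_re, ne_eq, Complex.ofReal_eq_zero]
      constructor
      · rintro ⟨hx0, hx⟩
        by_contra h
        push_neg at h
        rw [_root_.abs_of_nonneg h] at hx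
        nlinarith
      · intro hx
        rw [_root_.abs_of_neg hx]
        exact ⟨hx.ne, by nlinarith⟩
    constructor
    · intro h
      have h1 := (hrealcond ((-a1 + w) / 2)).1
        (h (((-a1 + w) / 2 : ℝ) : ℂ) (by rw [hfac]; simp))
      have h2 := (hrealcond ((-a1 - w) / 2)).1
        (h (((-a1 - w) / 2 : ℝ) : ℂ) (by rw [hfac]; simp))
      have ha1 : 0 < a1 := by linarith
      have hb1 : (0:ℝ) < a1 - w := by linarith
      have hb2 : (0:ℝ) < a1 + w := by linarith
      have ha2 : 0 < a2 := by nlinarith [mul_pos hb1 hb2]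
      refine ⟨ha1, ?_⟩
      have hb3 : (0:ℝ) < 1 - s := by linarith
      nlinarith [mul_pos ha2 hb3]
    · rintro ⟨ha1, hprod⟩ z hz
      have ha2 : 0 < a2 := by
        by_contra h
        push_neg at h
        nlinarith [sq_nonneg a1, mul_nonneg (neg_nonneg.mpr h) hsnn]
      have hwa : w < a1 := by
        rw [hwdef]
        exact (Real.sqrt_lt' ha1).2 (by nlinarith)
      rw [hfac] at hz
      rcases mul_eq_zero.1 hz with h | h
      · rw [sub_eq_zero] at h
        rw [h]
        exact (hrealcond _).2 (by linarith)
      · rw [sub_eq_zero] at h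
        rw [h]
        exact (hrealcond _).2 (by linarith)
  · push_neg at hD
    have ha2 : 0 < a2 := by nlinarith [sq_nonneg a1]
    obtain ⟨g, hg0, hg2⟩ : ∃ g : ℝ, 0 < g ∧ g ^ 2 = (4 * a2 - a1 ^ 2) / 4 := by
      have h4 : 0 < 4 * a2 - a1 ^ 2 := by nlinarith
      refine ⟨Real.sqrt (4 * a2 - a1 ^ 2) / 2, by positivity, ?_⟩
      rw [div_pow, Real.sq_sqrt h4.le]
      ring
    obtain ⟨m, hm0, hm2⟩ : ∃ m : ℝ, 0 < m ∧ m ^ 2 = a2 :=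
      ⟨Real.sqrt a2, Real.sqrt_pos.mpr ha2, Real.sq_sqrt ha2.le⟩
    set z1 : ℂ := ((-a1 / 2 : ℝ) : ℂ) + (g : ℂ) * Complex.I with hz1def
    set z2 : ℂ := ((-a1 / 2 : ℝ) : ℂ) - (g : ℂ) * Complex.I with hz2def
    have hre1 : z1.re = -a1 / 2 := by simp [hz1def]
    have him1 : z1.im = g := by simp [hz1def]
    have hre2 : z2.re = -a1 / 2 := by simp [hz2def]
    have him2 : z2.im = -g := by simp [hz2def]
    have habs1 : ‖z1‖ = m := by
      rw [Complex.norm_def, Complex.normSq_apply, hre1, him1,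
        show -a1 / 2 * (-a1 / 2) + g * g = m ^ 2 by linear_combination hg2 - hm2]
      exact Real.sqrt_sq hm0.le
    have habs2 : ‖z2‖ = m := by
      rw [Complex.norm_def, Complex.normSq_apply, hre2, him2,
        show -a1 / 2 * (-a1 / 2) + -g * -g = m ^ 2 by linear_combination hg2 - hm2]
      exact Real.sqrt_sq hm0.le
    have hne1 : z1 ≠ 0 := by
      intro h
      have := congrArg Complex.im h
      rw [him1] at this
      simp at this
      linarith
    have hne2 : z2 ≠ 0 := by
      intro h
      have := congrArg Complex.im h
      rw [him2] at this
      simp at this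
      linarith
    have hg2c : (g : ℂ) ^ 2 * Complex.I ^ 2 = -(((4 * a2 - a1 ^ 2) / 4 : ℝ) : ℂ) := by
      rw [Complex.I_sq]
      have := congrArg (fun x : ℝ => (x : ℂ)) hg2
      push_cast at this ⊢
      rw [this]
      ring
    have hfac : ∀ z : ℂ, z ^ 2 + (a1 : ℂ) * z + (a2 : ℂ) = (z - z1) * (z - z2) := by
      intro z
      rw [hz1def, hz2def]
      push_cast at hg2c ⊢
      linear_combination hg2c
    have e1 : a2 * (a1 ^ 2 - 4 * a2 * s) =
        (m * m) * ((a1 - 2 * (m * c)) * (a1 + 2 * (m * c))) := by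
      rw [← hm2, hs]
      ring
    constructor
    · intro h
      obtain ⟨-, hlt⟩ := h z1 (by rw [hfac]; simp)
      rw [hre1, habs1] at hlt
      have hmc : m * c ≤ 0 := mul_nonpos_of_nonneg_of_nonpos hm0.le hc0
      have ha1 : 0 < a1 := by linarith
      refine ⟨ha1, ?_⟩
      rw [e1]
      have hb1 : (0:ℝ) < a1 - 2 * (m * c) := by linarith
      have hb2 : (0:ℝ) < a1 + 2 * (m * c) := by linarith
      exact mul_pos (mul_pos hm0 hm0) (mul_pos hb1 hb2)
    · rintro ⟨ha1, hp⟩ z hz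
      rw [e1] at hp
      have hmc : m * c ≤ 0 := mul_nonpos_of_nonneg_of_nonpos hm0.le hc0
      have hlt : -a1 / 2 < m * c := by
        by_contra hcon
        push_neg at hcon
        have hb1 : (0:ℝ) ≤ a1 - 2 * (m * c) := by linarith
        have hb2 : a1 + 2 * (m * c) ≤ 0 := by linarith
        have hb3 : (a1 - 2 * (m * c)) * (a1 + 2 * (m * c)) ≤ 0 :=
          mul_nonpos_of_nonneg_of_nonpos hb1 hb2
        have hb4 : (m * m) * ((a1 - 2 * (m * c)) * (a1 + 2 * (m * c))) ≤ 0 :=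
          mul_nonpos_of_nonneg_of_nonpos (mul_pos hm0 hm0).le hb3
        linarith
      rw [hfac] at hz
      rcases mul_eq_zero.1 hz with hzz | hzz
      · rw [sub_eq_zero] at hzz
        rw [hzz]
        exact ⟨hne1, by rw [hre1, habs1]; exact hlt⟩
      · rw [sub_eq_zero] at hzz
        rw [hzz]
        exact ⟨hne2, by rw [hre2, habs2]; exact hlt⟩
end

section
/- Let α be a real number with 1 ≤ α < 2, set s = cos²(απ/2), and let A be a 3×3 real matrix whose characteristic polynomial is λ³ + a_1 λ² + a_2 λ + a_3. Then every complex eigenvalue λ of A satisfies |arg(λ)| > απ/2 if and only if the following three inequalities hold: (i) a_1 > 0; (ii) (4a_1a_3 - 4a_2²)s + a_1²a_2 - a_1a_3 > 0; (iii) a_3·(-64a_3²s³ + (16a_1a_2a_3 + 48a_3²)s² - (4a_1³a_3 - 4a_1a_2a_3 + 4a_2³ + 12a_3²)s + a_1²a_2² - 2a_1a_2a_3 + a_3²) > 0. -/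
open Polynomial Complex Matrix

set_option maxHeartbeats 2000000

private lemma key_arg_real (θ : ℝ) (hθ1 : Real.pi/2 ≤ θ) (hθ2 : θ < Real.pi) (t : ℝ) :
    θ < |Complex.arg (t : ℂ)| ↔ t < 0 := by
  have hpi := Real.pi_pos
  rcases lt_or_ge t 0 with h|h
  · simp only [Complex.arg_ofReal_of_neg h, abs_of_pos hpi]
    exact ⟨fun _ => h, fun _ => hθ2⟩
  · simp only [Complex.arg_ofReal_of_nonneg h, abs_zero]
    constructor
    · intro hc; linarith
    · intro hc; linarith

private lemma key_arg_cx (θ s : ℝ) (hθ1 : Real.pi/2 ≤ θ) (hθ2 : θ < Real.pi)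
    (hs : s = Real.cos θ ^ 2) (z : ℂ) (hz : z.im ≠ 0) :
    θ < |z.arg| ↔ z.re < 0 ∧ 0 < (1 - s) * z.re ^ 2 - s * z.im ^ 2 := by
  have hpi := Real.pi_pos
  have hz0 : z ≠ 0 := fun h => hz (by simp [h])
  have hm : 0 < ‖z‖ := norm_pos_iff.mpr hz0
  have hm2 : (‖z‖) ^ 2 = z.re ^ 2 + z.im ^ 2 := by
    rw [Complex.sq_norm, Complex.normSq_apply]; ring
  have hcos_le : Real.cos θ ≤ 0 :=
    Real.cos_nonpos_of_pi_div_two_le_of_le hθ1 (by linarith)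
  have hsqrt : Real.sqrt s = -Real.cos θ := by
    rw [hs, Real.sqrt_sq_eq_abs, abs_of_nonpos hcos_le]
  have hs0 : 0 ≤ s := by rw [hs]; positivity
  -- θ < |arg z| ↔ cos |arg z| < cos θ
  have h1 : θ < |z.arg| ↔ Real.cos |z.arg| < Real.cos θ := by
    constructor
    · intro h
      exact Real.cos_lt_cos_of_nonneg_of_le_pi (by linarith) (Complex.abs_arg_le_pi z) h
    · intro h
      by_contra hc
      push_neg at hc
      exact absurd (Real.cos_le_cos_of_nonneg_of_le_pi (abs_nonneg _) (by linarith) hc)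
        (not_le.mpr h)
  rw [h1, Real.cos_abs, Complex.cos_arg hz0, div_lt_iff₀ hm,
    show Real.cos θ = -Real.sqrt s by linarith]
  set m := ‖z‖
  constructor
  · intro h
    have hsm : 0 ≤ Real.sqrt s * m := mul_nonneg (Real.sqrt_nonneg s) hm.le
    have hx : z.re < 0 := by nlinarith
    refine ⟨hx, ?_⟩
    have h2 : (Real.sqrt s * m) * (Real.sqrt s * m) < z.re * z.re := by nlinarith
    have h3 : Real.sqrt s * Real.sqrt s = s := Real.mul_self_sqrt hs0
    nlinarith
  · rintro ⟨hx, hu⟩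
    have h3 : Real.sqrt s * Real.sqrt s = s := Real.mul_self_sqrt hs0
    have hsm : 0 ≤ Real.sqrt s * m := mul_nonneg (Real.sqrt_nonneg s) hm.le
    nlinarith [sq_nonneg (z.re + Real.sqrt s * m)]

private lemma cubic_real_root (b c d : ℝ) : ∃ r : ℝ, r^3 + b*r^2 + c*r + d = 0 := by
  set f : ℝ → ℝ := fun v => v^3 + b*v^2 + c*v + d with hf
  have hc : Continuous f := by fun_prop
  set M : ℝ := 1 + |b| + |c| + |d| with hM
  have hM1 : 1 ≤ M := by
    have := abs_nonneg b; have := abs_nonneg c; have := abs_nonneg d; linarith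
  have hb := abs_nonneg b; have hcn := abs_nonneg c; have hdn := abs_nonneg d
  have hb1 := neg_abs_le b; have hb2 := le_abs_self b
  have hc1 := neg_abs_le c; have hc2 := le_abs_self c
  have hd1 := neg_abs_le d; have hd2 := le_abs_self d
  have h1 : 0 ≤ f M := by
    show (0:ℝ) ≤ M^3 + b*M^2 + c*M + d
    nlinarith [sq_nonneg M, mul_le_mul_of_nonneg_right hc2 (by nlinarith : (0:ℝ) ≤ M)]
  have h2 : f (-M) ≤ 0 := by
    show (-M)^3 + b*(-M)^2 + c*(-M) + d ≤ 0
    nlinarith [sq_nonneg M, mul_le_mul_of_nonneg_right hc1 (by nlinarith : (0:ℝ) ≤ M)]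
  have hsub : Set.Icc (f (-M)) (f M) ⊆ f '' Set.Icc (-M) M :=
    intermediate_value_Icc (by linarith) hc.continuousOn
  obtain ⟨r, _, hr⟩ := hsub ⟨h2, h1⟩
  exact ⟨r, hr⟩

private lemma root_neg (s p q t : ℝ) (hs0 : 0 ≤ s) (hs1 : s < 1)
    (hE1 : 0 < -(p+q+t))
    (hE2 : 0 < (4*(-(p+q+t))*(-(p*q*t)) - 4*(p*q+p*t+q*t)^2)*s
        + (-(p+q+t))^2*(p*q+p*t+q*t) - (-(p+q+t))*(-(p*q*t)))
    (hE3 : 0 < (-(p*q*t)) * (((p+q)^2-4*s*(p*q)) * (((p+t)^2-4*s*(p*t)) * ((q+t)^2-4*s*(q*t))))) :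
    p < 0 := by
  rcases lt_trichotomy p 0 with h|h|h
  · exact h
  · exfalso; rw [h] at hE3; norm_num at hE3
  · exfalso
    have hq0 : q ≠ 0 := by rintro rfl; norm_num at hE3
    have ht0 : t ≠ 0 := by rintro rfl; norm_num at hE3
    have twoPos : ∀ u v : ℝ, 0 < u → v < 0 → p + u + v < 0 →
        ¬ (0 < (4*(-(p+u+v))*(-(p*u*v)) - 4*(p*u+p*v+u*v)^2)*s
          + (-(p+u+v))^2*(p*u+p*v+u*v) - (-(p+u+v))*(-(p*u*v))) := by
      intro u v hu hv hsum hcon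
      have h4 : u + v < 0 := by linarith
      have h5 : p + v < 0 := by linarith
      have h6 : 0 < p + u := by linarith
      have hneg : p*u*v < 0 := mul_neg_of_pos_of_neg (mul_pos h hu) hv
      have hK : 0 < (p*u)^2+(p*v)^2+(u*v)^2 + (p*u*v)*(p+u+v) := by
        nlinarith [mul_pos_of_neg_of_neg hneg hsum, sq_nonneg (p*u), sq_nonneg (p*v), sq_nonneg (u*v)]
      have fact1 : 0 < (-(p+u+v)) * ((p+u)*((u+v)*(p+v))) :=
        mul_pos (by linarith) (mul_pos h6 (mul_pos_of_neg_of_neg h4 h5))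
      have fact2 : 0 ≤ s*((p*u)^2+(p*v)^2+(u*v)^2 + (p*u*v)*(p+u+v)) := mul_nonneg hs0 hK.le
      have hid : (4*(-(p+u+v))*(-(p*u*v)) - 4*(p*u+p*v+u*v)^2)*s
          + (-(p+u+v))^2*(p*u+p*v+u*v) - (-(p+u+v))*(-(p*u*v))
          = -((-(p+u+v)) * ((p+u)*((u+v)*(p+v))))
            - 4*(s*((p*u)^2+(p*v)^2+(u*v)^2 + (p*u*v)*(p+u+v))) := by ring
      rw [hid] at hcon
      linarith
    rcases lt_trichotomy q 0 with hq|hq|hq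
    · rcases lt_trichotomy t 0 with ht|ht|ht
      · -- q<0, t<0 : use E3
        have hg23 : 0 < (q+t)^2 - 4*s*(q*t) := by
          nlinarith [sq_nonneg (q-t), mul_pos (mul_pos_of_neg_of_neg hq ht) (by linarith : (0:ℝ) < 1 - s)]
        have hg12 : 0 ≤ (p+q)^2 - 4*s*(p*q) := by
          nlinarith [sq_nonneg (p+q), mul_nonneg hs0 (by nlinarith : (0:ℝ) ≤ -(p*q))]
        have hg13 : 0 ≤ (p+t)^2 - 4*s*(p*t) := by
          nlinarith [sq_nonneg (p+t), mul_nonneg hs0 (by nlinarith : (0:ℝ) ≤ -(p*t))]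
        have ha3 : -(p*q*t) < 0 := by nlinarith [mul_pos_of_neg_of_neg hq ht]
        have hD : 0 ≤ ((p+q)^2-4*s*(p*q)) * (((p+t)^2-4*s*(p*t)) * ((q+t)^2-4*s*(q*t))) :=
          mul_nonneg hg12 (mul_nonneg hg13 hg23.le)
        nlinarith [mul_nonneg hD (by linarith : (0:ℝ) ≤ p*q*t)]
      · exact absurd ht ht0
      · exact twoPos t q ht hq (by linarith) (hE2.trans_eq (by ring))
    · exact absurd hq hq0
    · rcases lt_trichotomy t 0 with ht|ht|ht
      · exact twoPos q t hq ht (by linarith) (hE2.trans_eq (by ring))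
      · exact absurd ht ht0
      · linarith

private lemma alg_real (s p q t a1 a2 a3 : ℝ) (hs0 : 0 ≤ s) (hs1 : s < 1)
    (h1 : a1 = -(p+q+t)) (h2 : a2 = p*q+p*t+q*t) (h3 : a3 = -(p*q*t)) :
    (p < 0 ∧ q < 0 ∧ t < 0) ↔
      (0 < a1 ∧
        0 < (4 * a1 * a3 - 4 * a2 ^ 2) * s + a1 ^ 2 * a2 - a1 * a3 ∧
        0 < a3 * (-(64 * a3 ^ 2 * s ^ 3) + (16 * a1 * a2 * a3 + 48 * a3 ^ 2) * s ^ 2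
              - (4 * a1 ^ 3 * a3 - 4 * a1 * a2 * a3 + 4 * a2 ^ 3 + 12 * a3 ^ 2) * s
              + a1 ^ 2 * a2 ^ 2 - 2 * a1 * a2 * a3 + a3 ^ 2)) := by
  have hDfac : a3 * (-(64 * a3 ^ 2 * s ^ 3) + (16 * a1 * a2 * a3 + 48 * a3 ^ 2) * s ^ 2
              - (4 * a1 ^ 3 * a3 - 4 * a1 * a2 * a3 + 4 * a2 ^ 3 + 12 * a3 ^ 2) * s
              + a1 ^ 2 * a2 ^ 2 - 2 * a1 * a2 * a3 + a3 ^ 2)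
      = (-(p*q*t)) * (((p+q)^2-4*s*(p*q)) * (((p+t)^2-4*s*(p*t)) * ((q+t)^2-4*s*(q*t)))) := by
    subst h1 h2 h3; ring
  have hE2eq : (4 * a1 * a3 - 4 * a2 ^ 2) * s + a1 ^ 2 * a2 - a1 * a3
      = (4*(-(p+q+t))*(-(p*q*t)) - 4*(p*q+p*t+q*t)^2)*s
        + (-(p+q+t))^2*(p*q+p*t+q*t) - (-(p+q+t))*(-(p*q*t)) := by
    subst h1 h2 h3; ring
  constructor
  · rintro ⟨hp, hq, ht⟩
    refine ⟨by rw [h1]; linarith, ?_, ?_⟩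
    · rw [hE2eq]
      have hL : 0 < (-(p+q+t)) * (-((p+q)*((q+t)*(t+p)))) := by
        have h4 : 0 < (q+t)*(t+p) := mul_pos_of_neg_of_neg (by linarith) (by linarith)
        have h5 : (-((p+q)*((q+t)*(t+p)))) = (-(p+q))*((q+t)*(t+p)) := by ring
        rw [h5]
        exact mul_pos (by linarith) (mul_pos (by linarith) h4)
      have hLR : 0 ≤ p*q*(p-q)^2 + p*t*(p-t)^2 + q*t*(q-t)^2 := by
        have := mul_nonneg (mul_pos_of_neg_of_neg hp hq).le (sq_nonneg (p-q))
        have := mul_nonneg (mul_pos_of_neg_of_neg hp ht).le (sq_nonneg (p-t))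
        have := mul_nonneg (mul_pos_of_neg_of_neg hq ht).le (sq_nonneg (q-t))
        linarith
      have hid : (4*(-(p+q+t))*(-(p*q*t)) - 4*(p*q+p*t+q*t)^2)*s
        + (-(p+q+t))^2*(p*q+p*t+q*t) - (-(p+q+t))*(-(p*q*t))
        = (1-s)*((-(p+q+t)) * (-((p+q)*((q+t)*(t+p)))))
          + s*(p*q*(p-q)^2 + p*t*(p-t)^2 + q*t*(q-t)^2) := by ring
      rw [hid]
      have := mul_pos (by linarith : (0:ℝ) < 1 - s) hL
      have := mul_nonneg hs0 hLR
      linarith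
    · rw [hDfac]
      have hg : ∀ u v : ℝ, u < 0 → v < 0 → 0 < (u+v)^2 - 4*s*(u*v) := by
        intro u v hu hv
        nlinarith [sq_nonneg (u-v), mul_pos (mul_pos_of_neg_of_neg hu hv) (by linarith : (0:ℝ) < 1 - s)]
      have ha3 : 0 < -(p*q*t) := by nlinarith [mul_pos_of_neg_of_neg hq ht]
      exact mul_pos ha3 (mul_pos (hg p q hp hq) (mul_pos (hg p t hp ht) (hg q t hq ht)))
  · rintro ⟨hE1, hE2, hE3⟩
    rw [h1] at hE1
    rw [hE2eq] at hE2
    rw [hDfac] at hE3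
    refine ⟨root_neg s p q t hs0 hs1 hE1 hE2 hE3,
      root_neg s q p t hs0 hs1 (by linarith) (hE2.trans_eq (by ring)) (hE3.trans_eq (by ring)),
      root_neg s t q p hs0 hs1 (by linarith) (hE2.trans_eq (by ring)) (hE3.trans_eq (by ring))⟩

private lemma alg_cx (s r x y a1 a2 a3 : ℝ) (hy : 0 < y) (hs0 : 0 ≤ s) (hs1 : s < 1)
    (h1 : a1 = -(r+2*x)) (h2 : a2 = 2*r*x+x^2+y^2) (h3 : a3 = -(r*(x^2+y^2))) :
    (r < 0 ∧ x < 0 ∧ 0 < (1-s)*x^2 - s*y^2) ↔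
      (0 < a1 ∧
        0 < (4 * a1 * a3 - 4 * a2 ^ 2) * s + a1 ^ 2 * a2 - a1 * a3 ∧
        0 < a3 * (-(64 * a3 ^ 2 * s ^ 3) + (16 * a1 * a2 * a3 + 48 * a3 ^ 2) * s ^ 2
              - (4 * a1 ^ 3 * a3 - 4 * a1 * a2 * a3 + 4 * a2 ^ 3 + 12 * a3 ^ 2) * s
              + a1 ^ 2 * a2 ^ 2 - 2 * a1 * a2 * a3 + a3 ^ 2)) := by
  have hm2 : (0:ℝ) < x^2 + y^2 := by positivity
  have hy2 : (0:ℝ) < y^2 := by positivity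
  have hinrpos : (0:ℝ) ≤ (x^2+y^2)^2 + r^2*(x^2+y^2) + 6*r*x*y^2 - 2*r*x^3 := by
    have h : (x^2+y^2)^2 + r^2*(x^2+y^2) + 6*r*x*y^2 - 2*r*x^3
        = (y^2 + r*x - x^2)^2 + (y*(r+2*x))^2 := by ring
    rw [h]; positivity
  constructor
  · rintro ⟨hr, hx, hu⟩
    have hrx : 0 < r*x := mul_pos_of_neg_of_neg hr hx
    have hQpos : 0 < ((r+x)^2 - y^2 - 4*s*r*x)^2 + (2*y*(r+x) - 4*s*r*y)^2 := by
      rcases lt_or_ge 0 (((r+x)^2 - y^2 - 4*s*r*x)^2 + (2*y*(r+x) - 4*s*r*y)^2) with h|h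
      · exact h
      · exfalso
        have hA1 : (r+x)^2 - y^2 - 4*s*r*x = 0 := by nlinarith [sq_nonneg ((r+x)^2 - y^2 - 4*s*r*x), sq_nonneg (2*y*(r+x) - 4*s*r*y)]
        have hA2 : 2*y*(r+x) - 4*s*r*y = 0 := by nlinarith [sq_nonneg ((r+x)^2 - y^2 - 4*s*r*x), sq_nonneg (2*y*(r+x) - 4*s*r*y)]
        have h5 : r + x - 2*s*r = 0 := by
          have h6 : 2*y*(r+x-2*s*r) = 0 := by linear_combination hA2
          rcases mul_eq_zero.mp h6 with h7|h7
          · linarith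
          · exact h7
        have hxr : x = r*(2*s-1) := by linarith [h5]
        have hs2 : 1/2 < s := by
          rcases le_or_gt s (1/2) with h8|h8
          · exfalso
            have : 0 ≤ r*(2*s-1) := by nlinarith [mul_nonneg (neg_nonneg.mpr hr.le) (by linarith : (0:ℝ) ≤ 1 - 2*s)]
            rw [← hxr] at this; linarith
          · exact h8
        have hyy : y^2 = 4*s*r^2*(1-s) := by linear_combination (-1) * hA1 + (x + r - 2*s*r) * h5
        have hr2 : (0:ℝ) < r^2 := by nlinarith [mul_pos_of_neg_of_neg hr hr]
        rw [hxr, hyy] at hu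
        nlinarith [mul_pos (mul_pos (by linarith : (0:ℝ) < 1 - s) hr2) (by linarith : (0:ℝ) < 4*s - 1)]
    refine ⟨by rw [h1]; linarith, ?_, ?_⟩
    · -- E2 > 0
      have key : 0 < (4 * (-(r+2*x)) * (-(r*(x^2+y^2))) - 4 * (2*r*x+x^2+y^2) ^ 2) * s
          + (-(r+2*x)) ^ 2 * (2*r*x+x^2+y^2) - (-(r+2*x)) * (-(r*(x^2+y^2))) := by
        rcases le_or_gt ((x^2+y^2)^2 + 2*r*x*(x^2+y^2) + r^2*(3*x^2-y^2)) 0 with hKs|hKs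
        · have hN : (0:ℝ) < (r+x)^2+y^2 := by positivity
          have hterm := mul_pos (mul_pos (by linarith : (0:ℝ) < -(r+2*x)) (by linarith : (0:ℝ) < -2*x)) hN
          have hterm2 := mul_nonpos_of_nonneg_of_nonpos hs0 hKs
          nlinarith [hterm, hterm2]
        · have hKU : 0 < ((x^2+y^2)^2 + 2*r*x*(x^2+y^2) + r^2*(3*x^2-y^2)) * ((1-s)*x^2 - s*y^2) :=
            mul_pos hKs hu
          have hW : 0 ≤ 2*(r*x)*((x^2+y^2)^2 + r^2*(x^2+y^2) + 6*r*x*y^2 - 2*r*x^3) := by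
            have := mul_nonneg hrx.le hinrpos
            linarith
          rcases lt_or_ge 0 ((4 * (-(r+2*x)) * (-(r*(x^2+y^2))) - 4 * (2*r*x+x^2+y^2) ^ 2) * s
              + (-(r+2*x)) ^ 2 * (2*r*x+x^2+y^2) - (-(r+2*x)) * (-(r*(x^2+y^2)))) with h|h
          · exact h
          · exfalso
            have hmul := mul_nonpos_of_nonpos_of_nonneg h hm2.le
            nlinarith [hmul, hKU, hW]
      rw [h1, h2, h3]
      exact key.trans_eq (by ring)
    · -- E3 > 0
      have key : 0 < 4*(-r)*((x^2+y^2)*((((1-s)*x^2 - s*y^2))*((((r+x)^2 - y^2 - 4*s*r*x))^2 + ((2*y*(r+x) - 4*s*r*y))^2))) :=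
        mul_pos (by linarith) (mul_pos hm2 (mul_pos hu hQpos))
      rw [h1, h2, h3]
      exact key.trans_eq (by ring)
  · rintro ⟨hE1, hE2, hE3⟩
    rw [h1] at hE1
    rw [h1, h2, h3] at hE2 hE3
    have hE2' : 0 < (4 * (-(r+2*x)) * (-(r*(x^2+y^2))) - 4 * (2*r*x+x^2+y^2) ^ 2) * s
        + (-(r+2*x)) ^ 2 * (2*r*x+x^2+y^2) - (-(r+2*x)) * (-(r*(x^2+y^2))) := hE2
    have hE3' : 0 < 4*(-r)*((x^2+y^2)*((((1-s)*x^2 - s*y^2))*((((r+x)^2 - y^2 - 4*s*r*x))^2 + ((2*y*(r+x) - 4*s*r*y))^2))) :=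
      hE3.trans_eq (by ring)
    have hQnn : (0:ℝ) ≤ (((r+x)^2 - y^2 - 4*s*r*x))^2 + ((2*y*(r+x) - 4*s*r*y))^2 := by positivity
    have hrU : 0 < (-r) * ((1-s)*x^2 - s*y^2) := by
      rcases lt_or_ge 0 ((-r) * ((1-s)*x^2 - s*y^2)) with h|h
      · exact h
      · exfalso
        have := mul_nonpos_of_nonpos_of_nonneg h (by positivity : (0:ℝ) ≤ 4*((x^2+y^2)*((((r+x)^2 - y^2 - 4*s*r*x))^2 + ((2*y*(r+x) - 4*s*r*y))^2)))
        nlinarith [hE3']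
    rcases lt_trichotomy r 0 with hr|hr|hr
    · -- r < 0 : U > 0, need x < 0
      have hU : 0 < (1-s)*x^2 - s*y^2 := by
        rcases lt_or_ge 0 ((1-s)*x^2 - s*y^2) with h|h
        · exact h
        · exfalso; nlinarith [mul_nonpos_of_nonneg_of_nonpos (by linarith : (0:ℝ) ≤ -r) h]
      refine ⟨hr, ?_, hU⟩
      rcases lt_or_ge x 0 with hx|hx
      · exact hx
      · exfalso
        rcases le_or_gt ((x^2+y^2)^2 + 2*r*x*(x^2+y^2) + r^2*(3*x^2-y^2)) 0 with hKs|hKs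
        · -- K ≤ 0 : E2*m² = 2rx·inr + 4KU ≤ 0
          have hWn : 2*(r*x)*((x^2+y^2)^2 + r^2*(x^2+y^2) + 6*r*x*y^2 - 2*r*x^3) ≤ 0 :=
            mul_nonpos_of_nonpos_of_nonneg (by nlinarith [mul_nonneg (by linarith : (0:ℝ) ≤ -r) hx]) hinrpos
          have hKUn : ((x^2+y^2)^2 + 2*r*x*(x^2+y^2) + r^2*(3*x^2-y^2)) * ((1-s)*x^2 - s*y^2) ≤ 0 :=
            mul_nonpos_of_nonpos_of_nonneg hKs hU.le
          nlinarith [mul_pos hE2' hm2, hWn, hKUn]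
        · -- K > 0 : E2 = a1*(-2x)*N - 4sK ≤ 0
          have hN : (0:ℝ) ≤ (r+x)^2+y^2 := by positivity
          have ht1 : 0 ≤ (-(r+2*x)) * (2*x) * ((r+x)^2+y^2) :=
            mul_nonneg (mul_nonneg hE1.le (by linarith)) hN
          have ht2 : 0 ≤ s * ((x^2+y^2)^2 + 2*r*x*(x^2+y^2) + r^2*(3*x^2-y^2)) :=
            mul_nonneg hs0 hKs.le
          nlinarith [ht1, ht2, hE2']
    · exfalso; rw [hr] at hrU; norm_num at hrU
    · -- r > 0 : U < 0 : use K ≥ 0 and E2 for contradiction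
      exfalso
      have hU : (1-s)*x^2 - s*y^2 < 0 := by nlinarith [hrU]
      have hx : x < -(r/2) := by linarith [hE1]
      have hKnn : (0:ℝ) ≤ (x^2+y^2)^2 + 2*r*x*(x^2+y^2) + r^2*(3*x^2-y^2) := by
        have hid : (x^2+y^2)^2 + 2*r*x*(x^2+y^2) + r^2*(3*x^2-y^2)
            = (y^2 - (3/4)*r^2)^2 + (-(r+2*x)/2)^4 + 2*y^2*(-(r+2*x)/2)^2
              + (3/2)*r^2*(-(r+2*x)/2)^2 + 2*r^3*(-(r+2*x)/2) := by ring
        rw [hid]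
        have h9 : 0 ≤ 2*r^3*(-(r+2*x)/2) :=
          mul_nonneg (by positivity) (by linarith)
        positivity
      have hWn : 2*(r*x)*((x^2+y^2)^2 + r^2*(x^2+y^2) + 6*r*x*y^2 - 2*r*x^3) ≤ 0 :=
        mul_nonpos_of_nonpos_of_nonneg (by nlinarith [mul_pos hr (by linarith : (0:ℝ) < -x)]) hinrpos
      have hKUn : ((x^2+y^2)^2 + 2*r*x*(x^2+y^2) + r^2*(3*x^2-y^2)) * ((1-s)*x^2 - s*y^2) ≤ 0 :=
        mul_nonpos_of_nonneg_of_nonpos hKnn hU.le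
      nlinarith [mul_pos hE2' hm2, hWn, hKUn]

/-- Stability criterion for 3-dimensional fractional-order systems with
`1 ≤ α < 2` and `s = cos²(απ/2)`. -/
theorem frac_stability_dim3 (α : ℝ) (hα1 : 1 ≤ α) (hα2 : α < 2)
    (s : ℝ) (hs : s = Real.cos (α * Real.pi / 2) ^ 2)
    (a1 a2 a3 : ℝ) (A : Matrix (Fin 3) (Fin 3) ℝ)
    (hchar : A.charpoly = X ^ 3 + C a1 * X ^ 2 + C a2 * X + C a3) :
    (∀ z : ℂ, (A.charpoly.map (algebraMap ℝ ℂ)).IsRoot z → α * Real.pi / 2 < |z.arg|) ↔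
      (0 < a1 ∧
        0 < (4 * a1 * a3 - 4 * a2 ^ 2) * s + a1 ^ 2 * a2 - a1 * a3 ∧
        0 < a3 * (-(64 * a3 ^ 2 * s ^ 3) + (16 * a1 * a2 * a3 + 48 * a3 ^ 2) * s ^ 2
              - (4 * a1 ^ 3 * a3 - 4 * a1 * a2 * a3 + 4 * a2 ^ 3 + 12 * a3 ^ 2) * s
              + a1 ^ 2 * a2 ^ 2 - 2 * a1 * a2 * a3 + a3 ^ 2)) := by
  have hpi := Real.pi_pos
  set θ := α * Real.pi / 2 with hθdef
  have hθ1 : Real.pi/2 ≤ θ := by rw [hθdef]; nlinarith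
  have hθ2 : θ < Real.pi := by rw [hθdef]; nlinarith
  have hs0 : 0 ≤ s := by rw [hs]; positivity
  have hs1 : s < 1 := by
    have hcg : Real.cos Real.pi < Real.cos θ :=
      Real.cos_lt_cos_of_nonneg_of_le_pi (by linarith) (le_refl _) hθ2
    rw [Real.cos_pi] at hcg
    have hcl : Real.cos θ ≤ 0 :=
      Real.cos_nonpos_of_pi_div_two_le_of_le hθ1 (by linarith)
    rw [hs]; nlinarith
  have hsθ : s = Real.cos θ ^ 2 := hs
  have hroot : ∀ z : ℂ, (A.charpoly.map (algebraMap ℝ ℂ)).IsRoot z ↔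
      z^3 + (a1:ℂ)*z^2 + (a2:ℂ)*z + (a3:ℂ) = 0 := by
    intro z
    rw [hchar]
    simp [Polynomial.IsRoot, Polynomial.eval_map, Complex.coe_algebraMap]
  rw [forall_congr' fun z => imp_congr (hroot z) Iff.rfl]
  obtain ⟨r, hr⟩ := cubic_real_root a1 a2 a3
  have hbc : ∀ z : ℂ, z^3 + (a1:ℂ)*z^2 + (a2:ℂ)*z + (a3:ℂ)
      = (z - (r:ℂ))*(z^2 + ((a1 + r : ℝ):ℂ)*z + ((a2 + a1*r + r^2 : ℝ):ℂ)) := by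
    intro z
    have hra3 : (a3:ℝ) = -(r*(a2 + a1*r + r^2)) := by linear_combination hr
    push_cast
    rw [show ((a3:ℝ):ℂ) = -((r:ℂ)*((a2:ℂ) + (a1:ℂ)*(r:ℂ) + (r:ℂ)^2)) by
      exact_mod_cast congrArg (fun u : ℝ => (u:ℂ)) hra3]
    push_cast
    ring
  rcases le_or_gt (4*(a2 + a1*r + r^2)) ((a1+r)^2) with hΔ | hΔ
  · -- all real roots
    set b := a1 + r with hb
    set c := a2 + a1*r + r^2 with hc
    set d := Real.sqrt (b^2 - 4*c) with hd
    have hd2 : d^2 = b^2 - 4*c := Real.sq_sqrt (by linarith)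
    set p := (-b + d)/2 with hp
    set q := (-b - d)/2 with hq
    have hsum : p + q = -b := by rw [hp, hq]; ring
    have hprod : p * q = c := by
      have h8 : p * q = (b^2 - d^2)/4 := by rw [hp, hq]; ring
      rw [hd2] at h8; rw [h8]; ring
    have hroots : ∀ z : ℂ, (z^3 + (a1:ℂ)*z^2 + (a2:ℂ)*z + (a3:ℂ) = 0) ↔
        (z = (r:ℂ) ∨ z = (p:ℂ) ∨ z = (q:ℂ)) := by
      intro z
      rw [hbc z]
      have e1 : ((p:ℂ)) + (q:ℂ) = -((b:ℝ):ℂ) := by exact_mod_cast hsum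
      have e2 : ((p:ℂ)) * (q:ℂ) = ((c:ℝ):ℂ) := by exact_mod_cast hprod
      have hfac2 : (z^2 + ((b:ℝ):ℂ)*z + ((c:ℝ):ℂ))
          = (z - (p:ℂ))*(z - (q:ℂ)) := by
        linear_combination z * e1 - e2
      rw [hfac2, mul_eq_zero, mul_eq_zero, sub_eq_zero, sub_eq_zero, sub_eq_zero]
    have htriple : (∀ z : ℂ, z^3 + (a1:ℂ)*z^2 + (a2:ℂ)*z + (a3:ℂ) = 0 → θ < |z.arg|) ↔
        (θ < |((r:ℝ):ℂ).arg| ∧ θ < |((p:ℝ):ℂ).arg| ∧ θ < |((q:ℝ):ℂ).arg|) := by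
      constructor
      · intro H
        exact ⟨H _ ((hroots _).mpr (Or.inl rfl)), H _ ((hroots _).mpr (Or.inr (Or.inl rfl))),
          H _ ((hroots _).mpr (Or.inr (Or.inr rfl)))⟩
      · rintro ⟨H1, H2, H3⟩ z hz
        rcases (hroots z).mp hz with rfl | rfl | rfl <;> assumption
    rw [htriple, key_arg_real θ hθ1 hθ2 r, key_arg_real θ hθ1 hθ2 p, key_arg_real θ hθ1 hθ2 q]
    exact alg_real s r p q a1 a2 a3 hs0 hs1 (by linear_combination hsum - hb)
      (by linear_combination (-r)*hsum - hprod + r*hb - hc)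
      (by linear_combination hr + r*hprod + r*hc)
  · -- complex pair
    set b := a1 + r with hb
    set c := a2 + a1*r + r^2 with hc
    set x := -b/2 with hx
    set y := Real.sqrt (4*c - b^2) / 2 with hy
    have hy0 : 0 < y := by
      rw [hy]
      have := Real.sqrt_pos.mpr (by linarith : 0 < 4*c - b^2)
      linarith
    have hy2 : y^2 = (4*c - b^2)/4 := by
      rw [hy, div_pow, Real.sq_sqrt (by linarith : (0:ℝ) ≤ 4*c - b^2)]
      norm_num
    have hxy : x^2 + y^2 = c := by rw [hx]; rw [hy2]; ring
    have hx2 : 2*x = -b := by rw [hx]; ring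
    set z1 : ℂ := (x:ℂ) + (y:ℂ)*Complex.I with hz1
    set z2 : ℂ := (x:ℂ) - (y:ℂ)*Complex.I with hz2
    have hroots : ∀ z : ℂ, (z^3 + (a1:ℂ)*z^2 + (a2:ℂ)*z + (a3:ℂ) = 0) ↔
        (z = (r:ℂ) ∨ z = z1 ∨ z = z2) := by
      intro z
      rw [hbc z]
      have e1 : ((x:ℝ):ℂ)*2 = -((b:ℝ):ℂ) := by exact_mod_cast (by linarith [hx2] : x*2 = -b)
      have e2 : ((x:ℝ):ℂ)^2 + ((y:ℝ):ℂ)^2 = ((c:ℝ):ℂ) := by exact_mod_cast hxy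
      have hfac2 : (z^2 + ((b:ℝ):ℂ)*z + ((c:ℝ):ℂ))
          = (z - z1)*(z - z2) := by
        rw [hz1, hz2]
        linear_combination z * e1 - e2 + ((y:ℂ)^2) * Complex.I_sq
      rw [hfac2, mul_eq_zero, mul_eq_zero, sub_eq_zero, sub_eq_zero, sub_eq_zero]
    have htriple : (∀ z : ℂ, z^3 + (a1:ℂ)*z^2 + (a2:ℂ)*z + (a3:ℂ) = 0 → θ < |z.arg|) ↔
        (θ < |((r:ℝ):ℂ).arg| ∧ θ < |z1.arg| ∧ θ < |z2.arg|) := by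
      constructor
      · intro H
        exact ⟨H _ ((hroots _).mpr (Or.inl rfl)), H _ ((hroots _).mpr (Or.inr (Or.inl rfl))),
          H _ ((hroots _).mpr (Or.inr (Or.inr rfl)))⟩
      · rintro ⟨H1, H2, H3⟩ z hz
        rcases (hroots z).mp hz with rfl | rfl | rfl <;> assumption
    have him1 : z1.im = y := by rw [hz1]; simp
    have hre1 : z1.re = x := by rw [hz1]; simp
    have him2 : z2.im = -y := by rw [hz2]; simp
    have hre2 : z2.re = x := by rw [hz2]; simp
    rw [htriple, key_arg_real θ hθ1 hθ2 r,
      key_arg_cx θ s hθ1 hθ2 hsθ z1 (by rw [him1]; exact ne_of_gt hy0),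
      key_arg_cx θ s hθ1 hθ2 hsθ z2 (by rw [him2]; exact ne_of_lt (by linarith)),
      him1, hre1, him2, hre2]
    have halg := alg_cx s r x y a1 a2 a3 hy0 hs0 hs1
      (by linear_combination hx2 - hb) (by linear_combination (-r)*hx2 + r*hb - hc - hxy)
      (by rw [hxy]; linear_combination hr + r*hc)
    constructor
    · rintro ⟨h1', h2', h3'⟩
      exact halg.mp ⟨h1', h2'.1, h2'.2.trans_eq (by ring)⟩
    · intro hE
      obtain ⟨hh1, hh2, hh3⟩ := halg.mpr hE
      exact ⟨hh1, ⟨hh2, hh3.trans_eq (by ring)⟩, ⟨hh2, hh3.trans_eq (by ring)⟩⟩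
end

section
/- Let α be a real number and let A be a 2×2 real matrix with entries a_11, a_12, a_21, a_22, whose characteristic polynomial is λ² + a_1 λ + a_2 with a_1 = -(a_11 + a_22) and a_2 = a_11a_22 - a_12a_21. Let H_α be the corresponding 4×4 fractional-order Routh-Hurwitz matrix (with n = 2). Then the leading principal minor of order 2 of H_α equals -(a_11 + a_22)·sin(απ/2), and the leading principal minor of order 4 of H_α (i.e. det H_α) equals (a_11a_22 - a_12a_21)·sin²(απ/2)·((a_11 + a_22)² - 4(a_11a_22 - a_12a_21)·cos²(απ/2)). -/
open Polynomial Complex Matrix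

/-- The 2n×2n fractional-order Routh–Hurwitz matrix `H_α` of the monic real polynomial
with coefficient sequence `a` (where `a 0 = 1`): row `2r+1` (1-indexed) has entry
`a j * sin ((n-j)απ/2)` in column `r+j+1` (1-indexed) for `0 ≤ j ≤ n` and zeros
elsewhere; row `2r+2` has entry `a j * cos ((n-j)απ/2)` in column `r+j+1` and zeros
elsewhere. -/
noncomputable def fracRouthHurwitz (n : ℕ) (α : ℝ) (a : ℕ → ℝ) :
    Matrix (Fin (2 * n)) (Fin (2 * n)) ℝ :=
  fun i c =>
    if i.val / 2 ≤ c.val ∧ c.val ≤ i.val / 2 + n then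
      (if i.val % 2 = 0 then
        a (c.val - i.val / 2) *
          Real.sin (((n - (c.val - i.val / 2) : ℕ) : ℝ) * α * Real.pi / 2)
      else
        a (c.val - i.val / 2) *
          Real.cos (((n - (c.val - i.val / 2) : ℕ) : ℝ) * α * Real.pi / 2))
    else 0

/-- The two even-order leading principal minors of the fractional-order
Routh–Hurwitz matrix `H_α` of a 2×2 real matrix `A`. -/
theorem frac_routh_hurwitz_minors_dim2 (α : ℝ) (a11 a12 a21 a22 a1 a2 : ℝ)
    (A : Matrix (Fin 2) (Fin 2) ℝ) (hA : A = !![a11, a12; a21, a22])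
    (ha1 : a1 = -(a11 + a22)) (ha2 : a2 = a11 * a22 - a12 * a21)
    (hchar : A.charpoly = X ^ 2 + C a1 * X + C a2)
    (Hα : Matrix (Fin (2 * 2)) (Fin (2 * 2)) ℝ)
    (hHα : Hα = fracRouthHurwitz 2 α
      (fun j => if j = 0 then 1 else if j = 1 then a1 else if j = 2 then a2 else 0)) :
    (Hα.submatrix (Fin.castLE (by omega : 2 ≤ 2 * 2))
        (Fin.castLE (by omega : 2 ≤ 2 * 2))).det
      = -(a11 + a22) * Real.sin (α * Real.pi / 2) ∧
    Hα.det = (a11 * a22 - a12 * a21) * Real.sin (α * Real.pi / 2) ^ 2 *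
        ((a11 + a22) ^ 2
          - 4 * (a11 * a22 - a12 * a21) * Real.cos (α * Real.pi / 2) ^ 2) := by
  set s := Real.sin (α * Real.pi / 2) with hsdef
  set c := Real.cos (α * Real.pi / 2) with hcdef
  have hM : Hα = !![Real.sin (α*Real.pi), a1 * s, 0, 0;
         Real.cos (α*Real.pi), a1 * c, a2, 0;
         0, Real.sin (α*Real.pi), a1 * s, 0;
         0, Real.cos (α*Real.pi), a1 * c, a2] := by
    rw [hHα]
    ext i j
    fin_cases i <;> fin_cases j <;>
      simp [fracRouthHurwitz, Matrix.vecHead, Matrix.vecTail, hsdef, hcdef] <;> ring_nf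
  have hs : Real.sin (α * Real.pi) = 2 * s * c := by
    rw [show α * Real.pi = 2 * (α * Real.pi / 2) by ring, Real.sin_two_mul]
  have hc : Real.cos (α * Real.pi) = c ^ 2 - s ^ 2 := by
    rw [show α * Real.pi = 2 * (α * Real.pi / 2) by ring, Real.cos_two_mul']
  have hpy : s ^ 2 + c ^ 2 = 1 := Real.sin_sq_add_cos_sq _
  subst hM ha1 ha2
  constructor
  · have : (!![Real.sin (α*Real.pi), -(a11 + a22) * s, 0, 0;
         Real.cos (α*Real.pi), -(a11 + a22) * c, a11 * a22 - a12 * a21, 0;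
         0, Real.sin (α*Real.pi), -(a11 + a22) * s, 0;
         0, Real.cos (α*Real.pi), -(a11 + a22) * c, a11 * a22 - a12 * a21].submatrix
        (Fin.castLE (by omega : 2 ≤ 2 * 2)) (Fin.castLE (by omega : 2 ≤ 2 * 2)))
        = !![Real.sin (α*Real.pi), -(a11 + a22) * s;
             Real.cos (α*Real.pi), -(a11 + a22) * c] := by
      ext i j
      fin_cases i <;> fin_cases j <;> rfl
    rw [this, Matrix.det_fin_two_of, hs, hc]
    linear_combination (-(a11 + a22) * s) * hpy
  · show (!![Real.sin (α*Real.pi), -(a11 + a22) * s, 0, 0;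
         Real.cos (α*Real.pi), -(a11 + a22) * c, a11 * a22 - a12 * a21, 0;
         0, Real.sin (α*Real.pi), -(a11 + a22) * s, 0;
         0, Real.cos (α*Real.pi), -(a11 + a22) * c, a11 * a22 - a12 * a21] :
       Matrix (Fin 4) (Fin 4) ℝ).det = _
    simp only [Matrix.det_succ_row_zero, Fin.sum_univ_succ, Fin.sum_univ_zero]
    norm_num [Fin.succAbove, Fin.lt_def, hs, hc, Fin.castSucc, Fin.castAdd, Fin.castLE, Fin.succ]
    linear_combination ((a11 * a22 - a12 * a21) * (a11 + a22) ^ 2 * s ^ 2) * hpy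
end

section
/- Let α be a real number with 1 ≤ α < 2 and let A be a 2×2 real matrix with entries a_11, a_12, a_21, a_22. Then every complex eigenvalue λ of A satisfies |arg(λ)| > απ/2 if and only if -(a_11 + a_22) > 0 and (a_11a_22 - a_12a_21)·((a_11 + a_22)² - 4(a_11a_22 - a_12a_21)·cos²(απ/2)) > 0. -/
open Polynomial Complex Matrix

/-- arg criterion for real numbers -/
lemma aux_arg_real (θ : ℝ) (hθ0 : 0 < θ) (hθπ : θ < Real.pi) (r : ℝ) :
    θ < |Complex.arg (r : ℂ)| ↔ r < 0 := by
  by_cases hr : r < 0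
  · simp [Complex.arg_ofReal_of_neg hr, abs_of_pos Real.pi_pos, hθπ, hr]
  · simp [Complex.arg_ofReal_of_nonneg (not_lt.1 hr), hr, not_lt.2 hθ0.le]

/-- arg criterion for nonzero complex numbers -/
lemma aux_arg_complex (θ : ℝ) (hθ0 : 0 ≤ θ) (hθπ : θ ≤ Real.pi) (z : ℂ) (hz : z ≠ 0) :
    θ < |z.arg| ↔ z.re < ‖z‖ * Real.cos θ := by
  have habs : 0 < ‖z‖ := norm_pos_iff.mpr hz
  have h1 : |z.arg| ≤ Real.pi := Complex.abs_arg_le_pi z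
  have h2 : (0 : ℝ) ≤ |z.arg| := abs_nonneg _
  have hcos : Real.cos (arg z) = z.re / ‖z‖ := Complex.cos_arg hz
  have key : θ < |z.arg| ↔ Real.cos |z.arg| < Real.cos θ := by
    constructor
    · intro h; exact Real.cos_lt_cos_of_nonneg_of_le_pi hθ0 h1 h
    · intro h
      by_contra hcon
      exact absurd (Real.cos_le_cos_of_nonneg_of_le_pi h2 hθπ (not_lt.1 hcon)) (not_le.2 h)
  rw [key, Real.cos_abs, hcos, div_lt_iff₀ habs, mul_comm]

set_option maxHeartbeats 1000000 in
/-- Main equivalence for the quadratic z^2 - T z + D. -/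
lemma aux_key (θ : ℝ) (hθ1 : Real.pi / 2 ≤ θ) (hθ2 : θ < Real.pi) (T D : ℝ) :
    (∀ z : ℂ, z ^ 2 - (T : ℂ) * z + (D : ℂ) = 0 → θ < |z.arg|) ↔
      (0 < -T ∧ 0 < D * (T ^ 2 - 4 * D * Real.cos θ ^ 2)) := by
  have hpi := Real.pi_pos
  have hθ0 : 0 < θ := lt_of_lt_of_le (by linarith) hθ1
  have hcosle : Real.cos θ ≤ 0 := Real.cos_nonpos_of_pi_div_two_le_of_le hθ1 (by linarith)
  have hcossq : Real.cos θ ^ 2 < 1 := by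
    have hs : 0 < Real.sin θ := Real.sin_pos_of_pos_of_lt_pi hθ0 hθ2
    nlinarith [Real.sin_sq_add_cos_sq θ]
  rcases le_or_gt (4 * D) (T ^ 2) with hdisc | hdisc
  · -- real roots
    set s := Real.sqrt (T ^ 2 - 4 * D) with hs_def
    have hs0 : 0 ≤ s := Real.sqrt_nonneg _
    have hs2 : s ^ 2 = T ^ 2 - 4 * D := Real.sq_sqrt (by linarith)
    have hs2C : (s : ℂ) ^ 2 = (T : ℂ) ^ 2 - 4 * (D : ℂ) := by exact_mod_cast hs2
    set r₁ : ℝ := (T + s) / 2 with hr₁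
    set r₂ : ℝ := (T - s) / 2 with hr₂
    have hfac : ∀ z : ℂ, z ^ 2 - (T : ℂ) * z + (D : ℂ) = (z - (r₁ : ℂ)) * (z - (r₂ : ℂ)) := by
      intro z
      have : ((r₁ : ℝ) : ℂ) = ((T : ℂ) + s) / 2 := by push_cast [hr₁]; ring
      have : ((r₂ : ℝ) : ℂ) = ((T : ℂ) - s) / 2 := by push_cast [hr₂]; ring
      push_cast [hr₁, hr₂]
      linear_combination (1 / 4 : ℂ) * hs2C
    have hroot : ∀ z : ℂ, z ^ 2 - (T : ℂ) * z + (D : ℂ) = 0 ↔ (z = (r₁ : ℂ) ∨ z = (r₂ : ℂ)) := by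
      intro z
      rw [hfac, mul_eq_zero, sub_eq_zero, sub_eq_zero]
    have hiff : (∀ z : ℂ, z ^ 2 - (T : ℂ) * z + (D : ℂ) = 0 → θ < |z.arg|) ↔
        (r₁ < 0 ∧ r₂ < 0) := by
      constructor
      · intro h
        constructor
        · rw [← aux_arg_real θ hθ0 hθ2]; exact h _ ((hroot _).2 (Or.inl rfl))
        · rw [← aux_arg_real θ hθ0 hθ2]; exact h _ ((hroot _).2 (Or.inr rfl))
      · rintro ⟨h1, h2⟩ z hz
        rcases (hroot z).1 hz with rfl | rfl
        · exact (aux_arg_real θ hθ0 hθ2 r₁).2 h1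
        · exact (aux_arg_real θ hθ0 hθ2 r₂).2 h2
    rw [hiff]
    constructor
    · rintro ⟨h1, h2⟩
      have hT : T < 0 := by rw [hr₁] at h1; rw [hr₂] at h2; linarith
      have hD : 0 < D := by
        have : r₁ * r₂ = D := by rw [hr₁, hr₂]; nlinarith [hs2]
        nlinarith
      refine ⟨by linarith, ?_⟩
      have h3 : 0 < T ^ 2 - 4 * D * Real.cos θ ^ 2 := by
        nlinarith [mul_pos hD (sub_pos.2 hcossq)]
      exact mul_pos hD h3
    · rintro ⟨h1, h2⟩
      have hT : T < 0 := by linarith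
      have hD : 0 < D := by
        by_contra hc
        push_neg at hc
        have h3 : 0 ≤ T ^ 2 - 4 * D * Real.cos θ ^ 2 := by
          nlinarith [sq_nonneg T, sq_nonneg (Real.cos θ),
            mul_nonneg (neg_nonneg.2 hc) (sq_nonneg (Real.cos θ))]
        nlinarith [mul_nonneg (neg_nonneg.2 hc) h3]
      have hsT : s < -T := by nlinarith
      constructor
      · rw [hr₁]; linarith
      · rw [hr₂]; linarith
  · -- complex conjugate roots
    have hD : 0 < D := by nlinarith
    set s := Real.sqrt (4 * D - T ^ 2) with hs_def
    have hs0 : 0 < s := Real.sqrt_pos.2 (by linarith)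
    have hs2 : s ^ 2 = 4 * D - T ^ 2 := Real.sq_sqrt (by linarith)
    clear_value s
    set z₁ : ℂ := (T / 2 : ℝ) + (s / 2 : ℝ) * Complex.I with hz₁
    set z₂ : ℂ := (T / 2 : ℝ) + (-(s / 2) : ℝ) * Complex.I with hz₂
    clear_value z₁ z₂
    have hs2C : (s : ℂ) ^ 2 = 4 * (D : ℂ) - (T : ℂ) ^ 2 := by exact_mod_cast hs2
    have hI : (Complex.I : ℂ) ^ 2 = -1 := Complex.I_sq
    have hfac : ∀ z : ℂ, z ^ 2 - (T : ℂ) * z + (D : ℂ) = (z - z₁) * (z - z₂) := by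
      intro z
      rw [hz₁, hz₂]
      push_cast
      linear_combination ((s : ℂ) ^ 2 / 4) * hI + (-(1 / 4) : ℂ) * hs2C
    have hroot : ∀ z : ℂ, z ^ 2 - (T : ℂ) * z + (D : ℂ) = 0 ↔ (z = z₁ ∨ z = z₂) := by
      intro z
      rw [hfac, mul_eq_zero, sub_eq_zero, sub_eq_zero]
    have habs1 : ‖z₁‖ = Real.sqrt D := by
      rw [hz₁, Complex.norm_def, Complex.normSq_add_mul_I]
      congr 1
      nlinarith
    have habs2 : ‖z₂‖ = Real.sqrt D := by
      rw [hz₂, Complex.norm_def, Complex.normSq_add_mul_I]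
      congr 1
      nlinarith
    have hre1 : z₁.re = T / 2 := by simp [hz₁]
    have hre2 : z₂.re = T / 2 := by simp [hz₂]
    have hne1 : z₁ ≠ 0 := by
      intro h
      have := congrArg Complex.im h
      simp [hz₁] at this
      linarith
    have hne2 : z₂ ≠ 0 := by
      intro h
      have := congrArg Complex.im h
      simp [hz₂] at this
      linarith
    have hsqD : 0 < Real.sqrt D := Real.sqrt_pos.2 hD
    have hsqD2 : Real.sqrt D ^ 2 = D := Real.sq_sqrt hD.le
    have hiff : (∀ z : ℂ, z ^ 2 - (T : ℂ) * z + (D : ℂ) = 0 → θ < |z.arg|) ↔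
        (T / 2 < Real.sqrt D * Real.cos θ) := by
      constructor
      · intro h
        have := h z₁ ((hroot _).2 (Or.inl rfl))
        rw [aux_arg_complex θ hθ0.le hθ2.le z₁ hne1, habs1, hre1] at this
        exact this
      · intro h z hz
        rcases (hroot z).1 hz with he | he
        · rw [he, aux_arg_complex θ hθ0.le hθ2.le z₁ hne1, habs1, hre1]; exact h
        · rw [he, aux_arg_complex θ hθ0.le hθ2.le z₂ hne2, habs2, hre2]; exact h
    have hu : Real.sqrt D * Real.cos θ ≤ 0 :=
      mul_nonpos_of_nonneg_of_nonpos hsqD.le hcosle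
    have hDc : (Real.sqrt D * Real.cos θ) ^ 2 = D * Real.cos θ ^ 2 := by
      rw [mul_pow, hsqD2]
    rw [hiff]
    constructor
    · intro h
      have hT : T < 0 := by linarith
      refine ⟨by linarith, ?_⟩
      have key : 0 < (Real.sqrt D * Real.cos θ - T / 2) *
          (-(Real.sqrt D * Real.cos θ) - T / 2) :=
        mul_pos (by linarith) (by linarith)
      have hsq : 4 * D * Real.cos θ ^ 2 < T ^ 2 := by nlinarith [key, hDc]
      have h3 : 0 < T ^ 2 - 4 * D * Real.cos θ ^ 2 := by linarith
      exact mul_pos hD h3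
    · rintro ⟨h1, h2⟩
      have hT : T < 0 := by linarith
      have hsq : 4 * D * Real.cos θ ^ 2 < T ^ 2 := by nlinarith [mul_pos hD hD]
      by_contra hc
      push_neg at hc
      have hmm := mul_le_mul (show -(T / 2) ≤ -(Real.sqrt D * Real.cos θ) by linarith)
        (show -(T / 2) ≤ -(Real.sqrt D * Real.cos θ) by linarith)
        (by linarith) (by linarith)
      nlinarith [hmm, hDc]

/-- Stability criterion for a general 2×2 fractional-order system with `1 ≤ α < 2`,
expressed directly in terms of the entries of the system matrix. -/
theorem frac_stability_dim2_entries (α : ℝ) (hα1 : 1 ≤ α) (hα2 : α < 2)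
    (a11 a12 a21 a22 : ℝ)
    (A : Matrix (Fin 2) (Fin 2) ℝ) (hA : A = !![a11, a12; a21, a22]) :
    (∀ z : ℂ, (A.charpoly.map (algebraMap ℝ ℂ)).IsRoot z → α * Real.pi / 2 < |z.arg|) ↔
      (0 < -(a11 + a22) ∧
        0 < (a11 * a22 - a12 * a21) *
          ((a11 + a22) ^ 2
            - 4 * (a11 * a22 - a12 * a21) * Real.cos (α * Real.pi / 2) ^ 2)) := by
  have hpi := Real.pi_pos
  have hθ1 : Real.pi / 2 ≤ α * Real.pi / 2 := by nlinarith
  have hθ2 : α * Real.pi / 2 < Real.pi := by nlinarith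
  have hcp : A.charpoly = X ^ 2 - C (a11 + a22) * X + C (a11 * a22 - a12 * a21) := by
    rw [Matrix.charpoly, Matrix.det_fin_two]
    subst hA
    simp [charmatrix_apply_eq, charmatrix_apply_ne]
    ring
  have hroot : ∀ z : ℂ, (A.charpoly.map (algebraMap ℝ ℂ)).IsRoot z ↔
      z ^ 2 - ((a11 + a22 : ℝ) : ℂ) * z + ((a11 * a22 - a12 * a21 : ℝ) : ℂ) = 0 := by
    intro z
    rw [hcp]
    simp [Polynomial.IsRoot, Polynomial.eval_map, Polynomial.eval₂_add,
      Polynomial.eval₂_sub, Polynomial.eval₂_mul, Polynomial.eval₂_pow,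
      Polynomial.eval₂_X, Polynomial.eval₂_C]
  constructor
  · intro h
    have := (aux_key (α * Real.pi / 2) hθ1 hθ2 (a11 + a22) (a11 * a22 - a12 * a21)).1
      (fun z hz => h z ((hroot z).2 hz))
    exact this
  · intro h
    intro z hz
    exact (aux_key (α * Real.pi / 2) hθ1 hθ2 (a11 + a22) (a11 * a22 - a12 * a21)).2 h z
      ((hroot z).1 hz)
end

section
/- Let β_1, β_2 be real numbers and let M(β_1, β_2) = A_0 + β_1 A_1 + β_2 A_2, where A_0 = [[-1, 3], [0, -1]], A_1 = [[-1, 0], [1, -1]], and A_2 = [[-1, 1], [0, 0]]. Then every complex eigenvalue λ of M(β_1, β_2) satisfies |arg(λ)| > 3π/4 if and only if 2β_1 + 2 + β_2 > 0 and (β_1² + β_2 - β_1 + 1)·((2β_1 + 2 + β_2)² - 2(β_1² + β_2 - β_1 + 1)) > 0. -/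
open Polynomial Complex Matrix

lemma arg_iff (z : ℂ) : 3 * Real.pi / 4 < |z.arg| ↔ z.re + |z.im| < 0 := by
  by_cases hz : z = 0
  · subst hz
    simp [Complex.arg_zero]
    positivity
  · have habs : 0 < ‖z‖ := norm_pos_iff.mpr hz
    have hcos : Real.cos z.arg = z.re / ‖z‖ := Complex.cos_arg hz
    have h1 : |z.arg| ≤ Real.pi := Complex.abs_arg_le_pi z
    have hpi : (0:ℝ) < Real.pi := Real.pi_pos
    have hmem1 : |z.arg| ∈ Set.Icc 0 Real.pi := ⟨abs_nonneg _, h1⟩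
    have hmem2 : 3 * Real.pi / 4 ∈ Set.Icc 0 Real.pi := by
      constructor <;> nlinarith
    have hiff : Real.cos |z.arg| < Real.cos (3 * Real.pi / 4) ↔
        3 * Real.pi / 4 < |z.arg| :=
      Real.strictAntiOn_cos.lt_iff_gt hmem1 hmem2
    have hcos2 : Real.cos |z.arg| = z.re / ‖z‖ := by
      rcases abs_choice z.arg with h | h <;> rw [h] <;> simp [hcos]
    have hval : Real.cos (3 * Real.pi / 4) = -(Real.sqrt 2 / 2) := by
      have : 3 * Real.pi / 4 = Real.pi - Real.pi / 4 := by ring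
      rw [this, Real.cos_pi_sub, Real.cos_pi_div_four]
    rw [← hiff, hcos2, hval, div_lt_iff₀ habs]
    have hs2 : Real.sqrt 2 ^ 2 = 2 := Real.sq_sqrt (by norm_num)
    have hsnn : 0 < Real.sqrt 2 := by positivity
    have habssq : ‖z‖ ^ 2 = z.re ^ 2 + z.im ^ 2 := by
      rw [Complex.sq_norm, Complex.normSq_apply]; ring
    have himsq : |z.im| ^ 2 = z.im ^ 2 := sq_abs _
    have himnn : 0 ≤ |z.im| := abs_nonneg _
    have key : z.re < -(Real.sqrt 2 / 2) * ‖z‖ ↔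
        (z.re < 0 ∧ z.im ^ 2 < z.re ^ 2) := by
      constructor
      · intro h
        have hre : z.re < 0 := by nlinarith [mul_pos hsnn habs]
        refine ⟨hre, ?_⟩
        have h2 : Real.sqrt 2 * ‖z‖ < -2 * z.re := by linarith
        have h3 : (Real.sqrt 2 * ‖z‖) ^ 2 < (-2 * z.re) ^ 2 := by
          apply sq_lt_sq' _ h2
          nlinarith [mul_pos hsnn habs]
        rw [mul_pow, hs2] at h3
        nlinarith
      · rintro ⟨hre, him2⟩
        have h3 : (Real.sqrt 2 * ‖z‖) ^ 2 < (-2 * z.re) ^ 2 := by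
          rw [mul_pow, hs2]; nlinarith
        have h2 : Real.sqrt 2 * ‖z‖ < -2 * z.re :=
          lt_of_pow_lt_pow_left₀ 2 (by linarith) h3
        linarith
    rw [key]
    constructor
    · rintro ⟨hre, him2⟩
      have : |z.im| < -z.re := by
        apply lt_of_pow_lt_pow_left₀ 2 (by linarith)
        rw [himsq]; nlinarith
      linarith
    · intro h
      have hre : z.re < 0 := by linarith
      have h2 : |z.im| < -z.re := by linarith
      have := pow_lt_pow_left₀ h2 himnn (n := 2) (by norm_num)
      refine ⟨hre, ?_⟩
      rw [himsq] at this
      nlinarith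

lemma quad_iff (b c : ℝ) :
    (∀ z : ℂ, z ^ 2 + (b : ℂ) * z + (c : ℂ) = 0 → z.re + |z.im| < 0) ↔
      (0 < b ∧ 0 < c * (b ^ 2 - 2 * c)) := by
  constructor
  · intro H
    by_cases hd : 0 ≤ b ^ 2 - 4 * c
    · -- real roots
      set s := Real.sqrt (b ^ 2 - 4 * c) with hs
      have hs2 : s ^ 2 = b ^ 2 - 4 * c := Real.sq_sqrt hd
      have hsnn : 0 ≤ s := Real.sqrt_nonneg _
      have root : ∀ x : ℝ, x ^ 2 + b * x + c = 0 → x < 0 := by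
        intro x hx
        have := H ((x : ℝ) : ℂ) (by push_cast; exact_mod_cast (by exact_mod_cast congrArg (fun t : ℝ => (t : ℂ)) hx : ((x ^ 2 + b * x + c : ℝ) : ℂ) = ((0 : ℝ) : ℂ)))
        simpa using this
      have h1 : (-b + s) / 2 < 0 := root _ (by nlinarith)
      have h2 : (-b - s) / 2 < 0 := root _ (by nlinarith)
      have hb : 0 < b := by linarith
      have hc : 0 < c := by nlinarith
      have h3 : 0 < b ^ 2 - 2 * c := by nlinarith
      exact ⟨hb, mul_pos hc h3⟩
    · push_neg at hd
      set t := Real.sqrt (4 * c - b ^ 2) with hts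
      have ht2 : t ^ 2 = 4 * c - b ^ 2 := Real.sq_sqrt (by linarith)
      have htpos : 0 < t := Real.sqrt_pos.mpr (by linarith)
      have hroot : ((-b / 2 : ℝ) : ℂ) + ((t / 2 : ℝ) : ℂ) * Complex.I ^ 1 = ((-b / 2 : ℝ) : ℂ) + ((t / 2 : ℝ) : ℂ) * Complex.I := by ring
      have := H (((-b / 2 : ℝ) : ℂ) + ((t / 2 : ℝ) : ℂ) * Complex.I) (by
        apply Complex.ext <;>
          simp [pow_two, Complex.add_re, Complex.add_im, Complex.mul_re, Complex.mul_im] <;>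
          nlinarith)
      simp [Complex.add_re, Complex.add_im, Complex.mul_re, Complex.mul_im] at this
      rw [abs_of_pos (by positivity : (0:ℝ) < t / 2)] at this
      have hb : 0 < b := by linarith
      have ht_lt : t < b := by linarith
      have ht2lt : t ^ 2 < b ^ 2 := by nlinarith
      have hc : 0 < c := by nlinarith
      have h3 : 0 < b ^ 2 - 2 * c := by nlinarith
      exact ⟨hb, mul_pos hc h3⟩
  · rintro ⟨hb, hc2⟩ z hz
    have hcc : 0 < c ∧ 0 < b ^ 2 - 2 * c := by
      rcases mul_pos_iff.mp hc2 with h | h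
      · exact h
      · nlinarith [sq_nonneg b, h.1, h.2]
    obtain ⟨hc, h3⟩ := hcc
    have hRe := congrArg Complex.re hz
    have hIm := congrArg Complex.im hz
    simp [pow_two, Complex.add_re, Complex.add_im, Complex.mul_re, Complex.mul_im] at hRe hIm
    set x := z.re
    set y := z.im
    have hfac : y * (2 * x + b) = 0 := by linarith [hIm]
    rcases mul_eq_zero.mp hfac with hy | hx
    · rw [hy, abs_zero, add_zero]
      by_contra hge
      push_neg at hge
      rw [hy] at hRe
      nlinarith
    · have hxval : x = -b / 2 := by linarith
      have hy2 : y ^ 2 = c - b ^ 2 / 4 := by nlinarith [hRe]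
      have hylt : |y| < b / 2 := by
        apply lt_of_pow_lt_pow_left₀ 2 (by positivity)
        rw [_root_.sq_abs]
        nlinarith
      rw [hxval]
      linarith

lemma charpoly_fin_two' (M : Matrix (Fin 2) (Fin 2) ℝ) :
    M.charpoly = X ^ 2 - C (M 0 0 + M 1 1) * X + C (M 0 0 * M 1 1 - M 0 1 * M 1 0) := by
  rw [Matrix.charpoly, Matrix.det_fin_two, charmatrix_apply_eq, charmatrix_apply_eq,
    charmatrix_apply_ne _ _ _ (by decide), charmatrix_apply_ne _ _ _ (by decide)]
  simp only [C_add, C_mul, C_sub]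
  ring

/-- Robust stability region for the fractional-order uncertain system
`D^{1.5} x = (A₀ + β₁A₁ + β₂A₂) x`: its eigenvalues `λ` all satisfy
`|arg λ| > 3π/4` iff the two explicit inequalities in `β₁, β₂` hold. -/
theorem robust_stability_example (β1 β2 : ℝ)
    (M : Matrix (Fin 2) (Fin 2) ℝ)
    (hM : M = !![(-1 : ℝ), 3; 0, -1] + β1 • !![(-1 : ℝ), 0; 1, -1]
            + β2 • !![(-1 : ℝ), 1; 0, 0]) :
    (∀ z : ℂ, (M.charpoly.map (algebraMap ℝ ℂ)).IsRoot z → 3 * Real.pi / 4 < |z.arg|) ↔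
      (0 < 2 * β1 + 2 + β2 ∧
        0 < (β1 ^ 2 + β2 - β1 + 1) *
          ((2 * β1 + 2 + β2) ^ 2 - 2 * (β1 ^ 2 + β2 - β1 + 1))) := by
  have h00 : M 0 0 = -1 - β1 - β2 := by rw [hM]; simp; ring
  have h01 : M 0 1 = 3 + β2 := by rw [hM]; simp
  have h10 : M 1 0 = β1 := by rw [hM]; simp
  have h11 : M 1 1 = -1 - β1 := by rw [hM]; simp; ring
  have hcp : M.charpoly.map (algebraMap ℝ ℂ) =
      X ^ 2 + C ((2 * β1 + 2 + β2 : ℝ) : ℂ) * X + C ((β1 ^ 2 + β2 - β1 + 1 : ℝ) : ℂ) := by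
    rw [charpoly_fin_two', h00, h01, h10, h11]
    simp only [Polynomial.map_add, Polynomial.map_sub, Polynomial.map_mul, Polynomial.map_pow,
      Polynomial.map_X, Polynomial.map_C, Complex.coe_algebraMap]
    have e1 : ((-1 - β1 - β2 + (-1 - β1) : ℝ) : ℂ) = -((2 * β1 + 2 + β2 : ℝ) : ℂ) := by
      push_cast; ring
    have e2 : (((-1 - β1 - β2) * (-1 - β1) - (3 + β2) * β1 : ℝ) : ℂ) =
        ((β1 ^ 2 + β2 - β1 + 1 : ℝ) : ℂ) := by push_cast; ring
    rw [e1, e2, map_neg]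
    ring
  rw [← quad_iff]
  apply forall_congr'
  intro z
  rw [hcp]
  simp only [Polynomial.IsRoot.def, Polynomial.eval_add, Polynomial.eval_mul,
    Polynomial.eval_pow, Polynomial.eval_X, Polynomial.eval_C]
  exact imp_congr Iff.rfl (arg_iff z)
end
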